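/- Let X be a topological space and φ : X → ℝ a function that is bounded above and lower semicontinuous. Define the oscillation of φ at x by Ω_φ(x) = inf over open neighborhoods U of x of (sup_{u ∈ U} φ(u) − inf_{u ∈ U} φ(u)). Then inf_{x ∈ X} Ω_φ(x) = 0. (Dually, the same holds if φ is bounded below and upper semicontinuous.) -/

import Mathlib

/-- If `φ : X → ℝ` is bounded above and lower semicontinuous on a nonempty
topological space, then the infimum over `x` of the oscillation
`Ω_φ(x) = inf over open neighborhoods U of x of (sup_{u∈U} φ(u) − inf_{u∈U} φ(u))`
is zero. (The oscillation over `U` is expressed as the diameter of `φ '' U`,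
valued in `ℝ≥0∞`.) -/
theorem inf_oscillation_eq_zero
    {X : Type*} [TopologicalSpace X] [Nonempty X] (φ : X → ℝ)
    (hbdd : BddAbove (Set.range φ)) (hlsc : LowerSemicontinuous φ) :
    ⨅ x : X, ⨅ (U : Set X) (_ : IsOpen U) (_ : x ∈ U), EMetric.diam (φ '' U) = 0 := by
  refine le_antisymm ?_ zero_le
  refine ENNReal.le_of_forall_pos_le_add fun ε hε _ => ?_
  rw [zero_add]
  set M := sSup (Set.range φ) with hM
  have hεR : (0 : ℝ) < ε := hε
  obtain ⟨y, ⟨x, rfl⟩, hy⟩ :=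
    exists_lt_of_lt_csSup (Set.range_nonempty φ) (sub_lt_self M hεR)
  set U : Set X := {z | M - ε < φ z} with hU
  have hUopen : IsOpen U := hlsc.isOpen_preimage (M - ε)
  have hxU : x ∈ U := hy
  have hdiam : EMetric.diam (φ '' U) ≤ (ε : ENNReal) := by
    apply EMetric.diam_le
    rintro a ⟨u, hu, rfl⟩ b ⟨v, hv, rfl⟩
    have hu2 : φ u ≤ M := le_csSup hbdd ⟨u, rfl⟩
    have hv2 : φ v ≤ M := le_csSup hbdd ⟨v, rfl⟩
    rw [edist_dist, ← ENNReal.ofReal_coe_nnreal]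
    apply ENNReal.ofReal_le_ofReal
    rw [Real.dist_eq, abs_le]
    constructor <;> [skip; skip] <;>
      · simp only [hU, Set.mem_setOf_eq] at hu hv
        linarith
  calc ⨅ x : X, ⨅ (U : Set X) (_ : IsOpen U) (_ : x ∈ U), EMetric.diam (φ '' U)
      ≤ ⨅ (V : Set X) (_ : IsOpen V) (_ : x ∈ V), EMetric.diam (φ '' V) := iInf_le _ x
    _ ≤ EMetric.diam (φ '' U) := by
        exact le_trans (le_trans (iInf_le _ U) (iInf_le _ hUopen)) (iInf_le _ hxU)
    _ ≤ (ε : ENNReal) := hdiam
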